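/- Let P be a row-stochastic matrix with stationary distribution ν, and set P̂ := P − 1νᵀ. If ‖P̂^k‖_∞ ≤ (1/2)^{⌊k/t_mix⌋} for all k ≥ 0, then the series Σ_{t=0}^∞ P̂^t converges, equals (I − P̂)^{-1}, and satisfies ‖(I − P + 1νᵀ)^{-1}‖_∞ ≤ 2 t_mix. -/

import Mathlib

open Finset

/-- Operator ∞-norm of a matrix: maximum absolute row sum. -/
noncomputable def matNormInf {S : Type*} [Fintype S] [Nonempty S] (A : Matrix S S ℝ) : ℝ :=
  Finset.univ.sup' Finset.univ_nonempty (fun i => ∑ j, |A i j|)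

lemma rowsum_le_matNormInf {S : Type*} [Fintype S] [Nonempty S] (A : Matrix S S ℝ) (i : S) :
    ∑ j, |A i j| ≤ matNormInf A :=
  Finset.le_sup' (fun i => ∑ j, |A i j|) (Finset.mem_univ i)

lemma abs_entry_le_matNormInf {S : Type*} [Fintype S] [Nonempty S] (A : Matrix S S ℝ) (i j : S) :
    |A i j| ≤ matNormInf A := by
  refine le_trans ?_ (rowsum_le_matNormInf A i)
  exact Finset.single_le_sum (f := fun k => |A i k|) (fun k _ => abs_nonneg _) (Finset.mem_univ j)

set_option maxHeartbeats 1000000 in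
theorem stmt3 {S : Type*} [Fintype S] [DecidableEq S] [Nonempty S]
    (P : Matrix S S ℝ) (hPnn : ∀ i j, 0 ≤ P i j) (hProw : ∀ i, ∑ j, P i j = 1)
    (ν : S → ℝ) (hνnn : ∀ i, 0 ≤ ν i) (hνsum : ∑ i, ν i = 1)
    (hstat : ∀ j, ∑ i, ν i * P i j = ν j)
    (tmix : ℕ) (htmix : 0 < tmix)
    (Phat : Matrix S S ℝ) (hPhat : Phat = P - Matrix.of (fun _ j => ν j))
    (hpow : ∀ k : ℕ, matNormInf (Phat ^ k) ≤ (1 / 2 : ℝ) ^ (k / tmix)) :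
    ∃ B : Matrix S S ℝ,
      (∀ i j, HasSum (fun t : ℕ => (Phat ^ t) i j) (B i j)) ∧
      (1 - Phat) * B = 1 ∧ B * (1 - Phat) = 1 ∧
      matNormInf B ≤ 2 * tmix := by
  -- the dominating sequence
  set c : ℕ → ℝ := fun t => (1 / 2 : ℝ) ^ (t / tmix) with hc
  have hc_nonneg : ∀ t, 0 ≤ c t := fun t => pow_nonneg (by norm_num) _
  -- block sums
  have hblock : ∀ n : ℕ, ∑ t ∈ Finset.range (n * tmix), c t
      = (tmix : ℝ) * ∑ q ∈ Finset.range n, (1 / 2 : ℝ) ^ q := by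
    intro n
    induction n with
    | zero => simp
    | succ n ih =>
      rw [Nat.succ_mul, Finset.sum_range_add, ih, Finset.sum_range_succ]
      have : ∀ i ∈ Finset.range tmix, c (n * tmix + i) = (1 / 2 : ℝ) ^ n := by
        intro i hi
        simp only [hc]
        congr 1
        rw [Nat.add_comm, Nat.add_mul_div_right _ _ htmix,
          Nat.div_eq_of_lt (Finset.mem_range.mp hi), Nat.zero_add]
      rw [Finset.sum_congr rfl this, Finset.sum_const, Finset.card_range]
      push_cast
      ring
  have hpartial : ∀ n : ℕ, ∑ t ∈ Finset.range n, c t ≤ 2 * tmix := by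
    intro n
    have h1 : ∑ t ∈ Finset.range n, c t ≤ ∑ t ∈ Finset.range (n * tmix), c t := by
      apply Finset.sum_le_sum_of_subset_of_nonneg
      · exact Finset.range_subset_range.mpr (Nat.le_mul_of_pos_right n htmix)
      · intro t _ _; exact hc_nonneg t
    refine h1.trans ?_
    rw [hblock n]
    have h2 := sum_geometric_two_le n
    nlinarith [(Nat.cast_pos (α := ℝ)).mpr htmix]
  have hc_summable : Summable c := summable_of_sum_range_le hc_nonneg hpartial
  have hc_tendsto : Filter.Tendsto c Filter.atTop (nhds 0) := hc_summable.tendsto_atTop_zero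
  -- entrywise bounds
  have habs : ∀ (t : ℕ) (i j : S), |(Phat ^ t) i j| ≤ c t := fun t i j =>
    (abs_entry_le_matNormInf _ i j).trans (hpow t)
  have habs_summable : ∀ i j : S, Summable (fun t => |(Phat ^ t) i j|) :=
    fun i j => Summable.of_nonneg_of_le (fun t => abs_nonneg _) (fun t => habs t i j) hc_summable
  have hsummable : ∀ i j : S, Summable (fun t => (Phat ^ t) i j) :=
    fun i j => (habs_summable i j).of_abs
  set B : Matrix S S ℝ := Matrix.of (fun i j => ∑' t, (Phat ^ t) i j) with hB
  have hHasSum : ∀ i j, HasSum (fun t : ℕ => (Phat ^ t) i j) (B i j) :=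
    fun i j => (hsummable i j).hasSum
  -- entries tend to zero
  have htend0 : ∀ i j : S, Filter.Tendsto (fun t => (Phat ^ t) i j) Filter.atTop (nhds 0) :=
    fun i j => squeeze_zero_norm (fun t => habs t i j) hc_tendsto
  -- telescoping: ∑' (f t - f (t+1)) = f 0
  have htelescope : ∀ i j : S,
      ∑' t : ℕ, ((Phat ^ t) i j - (Phat ^ (t + 1)) i j) = (Phat ^ 0) i j := by
    intro i j
    have hs : Summable (fun t : ℕ => (Phat ^ t) i j - (Phat ^ (t + 1)) i j) :=
      (hsummable i j).sub
        ((summable_nat_add_iff (f := fun t => (Phat ^ t) i j) 1).mpr (hsummable i j))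
    refine (hs.hasSum_iff_tendsto_nat.mpr ?_).tsum_eq
    have : (fun n => ∑ t ∈ Finset.range n, ((Phat ^ t) i j - (Phat ^ (t + 1)) i j))
        = fun n => (Phat ^ 0) i j - (Phat ^ n) i j := by
      funext n; exact Finset.sum_range_sub' (fun t => (Phat ^ t) i j) n
    rw [this]
    have := (htend0 i j).const_sub ((Phat ^ 0) i j)
    simpa using this
  refine ⟨B, hHasSum, ?_, ?_, ?_⟩
  · -- (1 - Phat) * B = 1
    ext i j
    rw [Matrix.mul_apply]
    have step1 : ∀ k, (1 - Phat) i k * B k j = ∑' t, (1 - Phat) i k * (Phat ^ t) k j := by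
      intro k; rw [tsum_mul_left]; rfl
    simp only [step1]
    rw [← Summable.tsum_finsetSum (fun k _ => (hsummable k j).mul_left _)]
    have step2 : ∀ t : ℕ, ∑ k, (1 - Phat) i k * (Phat ^ t) k j
        = (Phat ^ t) i j - (Phat ^ (t + 1)) i j := by
      intro t
      have : ((1 - Phat) * Phat ^ t) i j = (Phat ^ t) i j - (Phat ^ (t + 1)) i j := by
        rw [sub_mul, one_mul, ← pow_succ']
        simp [Matrix.sub_apply]
      rw [← this, Matrix.mul_apply]
    rw [tsum_congr step2, htelescope i j]
    simp [Matrix.one_apply]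
  · -- B * (1 - Phat) = 1
    ext i j
    rw [Matrix.mul_apply]
    have step1 : ∀ k, B i k * (1 - Phat) k j = ∑' t, (Phat ^ t) i k * (1 - Phat) k j := by
      intro k; rw [tsum_mul_right]; rfl
    simp only [step1]
    rw [← Summable.tsum_finsetSum (fun k _ => (hsummable i k).mul_right _)]
    have step2 : ∀ t : ℕ, ∑ k, (Phat ^ t) i k * (1 - Phat) k j
        = (Phat ^ t) i j - (Phat ^ (t + 1)) i j := by
      intro t
      have : (Phat ^ t * (1 - Phat)) i j = (Phat ^ t) i j - (Phat ^ (t + 1)) i j := by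
        rw [mul_sub, mul_one, ← pow_succ]
        simp [Matrix.sub_apply]
      rw [← this, Matrix.mul_apply]
    rw [tsum_congr step2, htelescope i j]
    simp [Matrix.one_apply]
  · -- norm bound
    apply Finset.sup'_le
    intro i _
    have h1 : ∀ j : S, |B i j| ≤ ∑' t, |(Phat ^ t) i j| := by
      intro j
      have := norm_tsum_le_tsum_norm (f := fun t : ℕ => (Phat ^ t) i j)
        (by simpa [Real.norm_eq_abs] using habs_summable i j)
      simpa [Real.norm_eq_abs, hB] using this
    calc ∑ j, |B i j| ≤ ∑ j, ∑' t, |(Phat ^ t) i j| :=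
          Finset.sum_le_sum (fun j _ => h1 j)
      _ = ∑' t, ∑ j, |(Phat ^ t) i j| :=
          (Summable.tsum_finsetSum (fun j _ => habs_summable i j)).symm
      _ ≤ ∑' t, c t := by
          apply Summable.tsum_le_tsum _ _ hc_summable
          · intro t
            exact (rowsum_le_matNormInf _ i).trans (hpow t)
          · apply Summable.of_nonneg_of_le (fun t => Finset.sum_nonneg fun j _ => abs_nonneg _)
              (fun t => (rowsum_le_matNormInf _ i).trans (hpow t)) hc_summable
      _ ≤ 2 * tmix := Summable.tsum_le_of_sum_range_le hc_summable hpartial
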